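/- Let E be an infinite-dimensional real Banach space with closed unit ball B and unit sphere S. Then there exists a continuous retraction ω : B → S, i.e., a continuous map with ω(x) = x for all x ∈ S. -/

import Mathlib

open Metric Set

section Stmt12Aux
variable {E : Type*} [NormedAddCommGroup E] [NormedSpace ℝ E]

lemma riesz_step (hdim : ¬ FiniteDimensional ℝ E) (F : Submodule ℝ E)
    [FiniteDimensional ℝ F] : ∃ x : E, ‖x‖ = 1 ∧ ∀ y ∈ F, (1:ℝ)/2 ≤ ‖x - y‖ := by
  have hFc : IsClosed (F : Set E) := Submodule.closed_of_finiteDimensional F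
  have hF : ∃ x : E, x ∉ F := by
    by_contra h
    push_neg at h
    have hTop : F = ⊤ := by ext z; simp [h z]
    subst hTop
    exact hdim ((Submodule.topEquiv (R := ℝ) (M := E)).finiteDimensional)
  obtain ⟨x₀, hx₀F, hx₀⟩ := riesz_lemma hFc hF (r := 1/2) (by norm_num)
  have hx₀ne : x₀ ≠ 0 := fun h => hx₀F (h ▸ F.zero_mem)
  have hn : ‖x₀‖ ≠ 0 := norm_ne_zero_iff.2 hx₀ne
  have hnpos : (0:ℝ) < ‖x₀‖ := norm_pos_iff.2 hx₀ne
  refine ⟨‖x₀‖⁻¹ • x₀, by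
    simp [norm_smul, abs_of_nonneg (le_of_lt (inv_pos.2 hnpos)), inv_mul_cancel₀ hn], ?_⟩
  intro y hy
  have hy' : ‖x₀‖ • y ∈ F := F.smul_mem _ hy
  have := hx₀ (‖x₀‖ • y) hy'
  have hcalc : ‖x₀ - ‖x₀‖ • y‖ = ‖x₀‖ * ‖‖x₀‖⁻¹ • x₀ - y‖ := by
    rw [← Real.norm_of_nonneg (le_of_lt hnpos), ← norm_smul, smul_sub, smul_smul,
      Real.norm_of_nonneg (le_of_lt hnpos), mul_inv_cancel₀ hn, one_smul]
  rw [hcalc] at this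
  have h2 : (1:ℝ)/2 * ‖x₀‖ ≤ ‖x₀‖ * ‖‖x₀‖⁻¹ • x₀ - y‖ := this
  calc (1:ℝ)/2 = (1/2 * ‖x₀‖) / ‖x₀‖ := by field_simp
    _ ≤ (‖x₀‖ * ‖‖x₀‖⁻¹ • x₀ - y‖) / ‖x₀‖ := by gcongr
    _ = ‖‖x₀‖⁻¹ • x₀ - y‖ := by field_simp

noncomputable def rzSeq (hdim : ¬ FiniteDimensional ℝ E) : ℕ → E
  | n =>
    haveI : FiniteDimensional ℝ (Submodule.span ℝ (Set.range fun m : Fin n => rzSeq hdim m)) :=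
      FiniteDimensional.span_of_finite ℝ (Set.finite_range _)
    Classical.choose (riesz_step hdim (Submodule.span ℝ (Set.range fun m : Fin n => rzSeq hdim m)))
  termination_by n => n
  decreasing_by all_goals exact m.isLt

lemma rzSeq_spec (hdim : ¬ FiniteDimensional ℝ E) (n : ℕ) :
    ‖rzSeq hdim n‖ = 1 ∧
      ∀ y ∈ Submodule.span ℝ (Set.range fun m : Fin n => rzSeq hdim m),
        (1:ℝ)/2 ≤ ‖rzSeq hdim n - y‖ := by
  haveI : FiniteDimensional ℝ (Submodule.span ℝ (Set.range fun m : Fin n => rzSeq hdim m)) :=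
    FiniteDimensional.span_of_finite ℝ (Set.finite_range _)
  have : rzSeq hdim n = Classical.choose (riesz_step hdim
      (Submodule.span ℝ (Set.range fun m : Fin n => rzSeq hdim m))) := by
    rw [rzSeq]
  rw [this]
  exact Classical.choose_spec (riesz_step hdim
    (Submodule.span ℝ (Set.range fun m : Fin n => rzSeq hdim m)))

/-- clamp to [0,1] -/
noncomputable def clmp (r : ℝ) : ℝ := min (max r 0) 1

lemma clmp_of_nonpos {r : ℝ} (h : r ≤ 0) : clmp r = 0 := by
  simp [clmp, max_eq_right h]
lemma clmp_of_ge_one {r : ℝ} (h : 1 ≤ r) : clmp r = 1 := by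
  have : max r 0 = r := max_eq_left (le_trans zero_le_one h)
  simp [clmp, this, min_eq_right h]
lemma clmp_of_mem {r : ℝ} (h0 : 0 ≤ r) (h1 : r ≤ 1) : clmp r = r := by
  simp [clmp, max_eq_left h0, min_eq_left h1]
lemma continuous_clmp : Continuous clmp := by
  unfold clmp; fun_prop

noncomputable def uvec (e : ℕ → E) (n : ℕ) : E := (2⁻¹ : ℝ) • e n

noncomputable def dvec (e : ℕ → E) (n : ℕ) : E := uvec e (n+1) - uvec e n

noncomputable def gam (e : ℕ → E) (t : ℝ) : E :=
  uvec e 0 + ∑ n ∈ Finset.range (⌈t⌉₊ + 1), clmp (t - n) • dvec e n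

lemma gam_eq (e : ℕ → E) (t : ℝ) {M : ℕ} (hM : ⌈t⌉₊ + 1 ≤ M) :
    gam e t = uvec e 0 + ∑ n ∈ Finset.range M, clmp (t - n) • dvec e n := by
  unfold gam
  congr 1
  refine Finset.sum_subset (Finset.range_subset_range.2 hM) ?_
  intro k _ hk
  have hk' : ⌈t⌉₊ ≤ k := by
    by_contra h
    exact hk (Finset.mem_range.2 (by omega))
  have : t ≤ (k : ℝ) := by exact_mod_cast Nat.ceil_le.1 hk'
  rw [clmp_of_nonpos (by linarith), zero_smul]

lemma continuous_gam (e : ℕ → E) : Continuous (gam e) := by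
  rw [continuous_iff_continuousAt]
  intro t₀
  set M : ℕ := ⌈t₀⌉₊ + 2 with hM
  have hcont : Continuous fun t : ℝ =>
      uvec e 0 + ∑ n ∈ Finset.range M, clmp (t - n) • dvec e n := by
    refine continuous_const.add (continuous_finset_sum _ fun n _ => ?_)
    exact ((continuous_clmp.comp (continuous_id.sub continuous_const))).smul continuous_const
  refine ContinuousAt.congr hcont.continuousAt ?_
  have hopen : IsOpen {t : ℝ | t < (M - 1 : ℕ)} := isOpen_Iio
  have ht₀ : t₀ ∈ {t : ℝ | t < (M - 1 : ℕ)} := by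
    have h1 : t₀ ≤ (⌈t₀⌉₊ : ℝ) := Nat.le_ceil t₀
    have h2 : ((M - 1 : ℕ) : ℝ) = (⌈t₀⌉₊ : ℝ) + 1 := by
      simp [hM]
    simp only [mem_setOf_eq, h2]
    linarith
  filter_upwards [hopen.mem_nhds ht₀] with t ht
  refine (gam_eq e t ?_).symm
  have : t ≤ ((M - 1 : ℕ) : ℝ) := le_of_lt ht
  have : ⌈t⌉₊ ≤ M - 1 := Nat.ceil_le.2 this
  omega

lemma gam_seg (e : ℕ → E) (n : ℕ) {s : ℝ} (h0 : 0 ≤ s) (h1 : s ≤ 1) :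
    gam e ((n : ℝ) + s) = uvec e n + s • dvec e n := by
  have hM : ⌈(n : ℝ) + s⌉₊ + 1 ≤ n + 2 := by
    have : (n : ℝ) + s ≤ ((n + 1 : ℕ) : ℝ) := by push_cast; linarith
    have := Nat.ceil_le.2 this
    omega
  rw [gam_eq e _ hM]
  rw [Finset.sum_range_succ, Finset.sum_range_succ]
  have h₁ : clmp ((n : ℝ) + s - (n : ℝ)) = s := by
    rw [show (n:ℝ) + s - (n:ℝ) = s by ring]; exact clmp_of_mem h0 h1
  have h₂ : clmp ((n : ℝ) + s - ((n+1 : ℕ) : ℝ)) = 0 := by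
    refine clmp_of_nonpos ?_
    push_cast; linarith
  have h₃ : ∑ k ∈ Finset.range n, clmp ((n:ℝ) + s - k) • dvec e k
      = ∑ k ∈ Finset.range n, dvec e k := by
    refine Finset.sum_congr rfl fun k hk => ?_
    have hk' : (k : ℝ) ≤ (n : ℝ) - 1 := by
      have := Finset.mem_range.1 hk
      have : (k : ℝ) + 1 ≤ (n : ℝ) := by exact_mod_cast this
      linarith
    rw [clmp_of_ge_one (by linarith), one_smul]
  rw [h₁, h₂, h₃, zero_smul, add_zero]
  have h₄ : ∑ k ∈ Finset.range n, dvec e k = uvec e n - uvec e 0 :=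
    Finset.sum_range_sub (uvec e) n
  rw [h₄]; abel

lemma gam_neg (e : ℕ → E) {t : ℝ} (h : t < 0) : gam e t = uvec e 0 := by
  have hc : ⌈t⌉₊ = 0 := Nat.ceil_eq_zero.2 (le_of_lt h)
  rw [gam, hc]
  rw [Finset.sum_range_one]
  rw [Nat.cast_zero, sub_zero, clmp_of_nonpos (le_of_lt h), zero_smul, add_zero]

def spanF (e : ℕ → E) (n : ℕ) : Submodule ℝ E :=
  Submodule.span ℝ (Set.range fun m : Fin n => e m)

lemma spanF_mono (e : ℕ → E) {a b : ℕ} (h : a ≤ b) : spanF e a ≤ spanF e b := by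
  refine Submodule.span_mono ?_
  rintro x ⟨m, rfl⟩
  exact ⟨⟨m, lt_of_lt_of_le m.isLt h⟩, rfl⟩

lemma e_mem_spanF (e : ℕ → E) {k n : ℕ} (h : k < n) : e k ∈ spanF e n :=
  Submodule.subset_span ⟨⟨k, h⟩, rfl⟩

lemma uvec_mem_spanF (e : ℕ → E) {k n : ℕ} (h : k < n) : uvec e k ∈ spanF e n :=
  Submodule.smul_mem _ _ (e_mem_spanF e h)

lemma gam_mem_spanF (e : ℕ → E) (n : ℕ) {s : ℝ} (h0 : 0 ≤ s) (h1 : s ≤ 1) :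
    gam e ((n : ℝ) + s) ∈ spanF e (n+2) := by
  rw [gam_seg e n h0 h1]
  have h1' : uvec e n ∈ spanF e (n+2) := uvec_mem_spanF e (by omega)
  have h2' : uvec e (n+1) ∈ spanF e (n+2) := uvec_mem_spanF e (by omega)
  exact Submodule.add_mem _ h1' (Submodule.smul_mem _ _ (Submodule.sub_mem _ h2' h1'))

variable {e : ℕ → E} (he1 : ∀ n, ‖e n‖ = 1)
  (hesep : ∀ n, ∀ y ∈ spanF e n, (1:ℝ)/2 ≤ ‖e n - y‖)

include he1 in
lemma norm_uvec (n : ℕ) : ‖uvec e n‖ = 1/2 := by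
  rw [uvec, norm_smul, he1 n]
  norm_num

include he1 in
lemma gam_norm (t : ℝ) : ‖gam e t‖ ≤ 1/2 := by
  rcases lt_or_ge t 0 with ht | ht
  · rw [gam_neg e ht, norm_uvec he1]
  · set n := ⌊t⌋₊ with hn
    set s := t - n with hs
    have h0 : 0 ≤ s := by
      have := Nat.floor_le ht
      simp only [hs]; linarith
    have h1 : s ≤ 1 := by
      have := Nat.lt_floor_add_one t
      simp only [hs]; linarith
    have ht' : t = (n : ℝ) + s := by simp [hs]
    rw [ht', gam_seg e n h0 h1]
    have : uvec e n + s • dvec e n = (1 - s) • uvec e n + s • uvec e (n+1) := by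
      simp only [dvec]; module
    rw [this]
    calc ‖(1 - s) • uvec e n + s • uvec e (n+1)‖
        ≤ ‖(1 - s) • uvec e n‖ + ‖s • uvec e (n+1)‖ := norm_add_le _ _
      _ = (1 - s) * (1/2) + s * (1/2) := by
          rw [norm_smul, norm_smul, norm_uvec he1, norm_uvec he1,
            Real.norm_of_nonneg (by linarith), Real.norm_of_nonneg h0]
      _ = 1/2 := by ring

include hesep in
lemma dist_smul_spanF {n : ℕ} {c : ℝ} (hc : 0 < c) {y : E} (hy : y ∈ spanF e n) :
    c / 2 ≤ ‖c • e n - y‖ := by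
  have key : ‖c • e n - y‖ = c * ‖e n - c⁻¹ • y‖ := by
    have h2 : c • e n - y = c • (e n - c⁻¹ • y) := by
      rw [smul_sub, smul_smul, mul_inv_cancel₀ (ne_of_gt hc), one_smul]
    rw [h2, norm_smul, Real.norm_of_nonneg (le_of_lt hc)]
  rw [key]
  have := hesep n (c⁻¹ • y) (Submodule.smul_mem _ _ hy)
  calc c / 2 = c * (1/2) := by ring
    _ ≤ c * ‖e n - c⁻¹ • y‖ := by
        exact mul_le_mul_of_nonneg_left this (le_of_lt hc)

include he1 hesep in
lemma gam_sep {t t' : ℝ} (ht : 0 ≤ t) (htt : t + 2 ≤ t') :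
    1/16 ≤ ‖gam e t' - gam e t‖ := by
  have ht' : (0:ℝ) ≤ t' := by linarith
  set n := ⌊t⌋₊ with hn
  set m := ⌊t'⌋₊ with hm
  set s := t - n with hs
  set s' := t' - m with hs'
  have hns : 0 ≤ s := by have := Nat.floor_le ht; simp only [hs]; linarith
  have hns1 : s ≤ 1 := by have := Nat.lt_floor_add_one t; simp only [hs]; linarith
  have hms : 0 ≤ s' := by have := Nat.floor_le ht'; simp only [hs']; linarith
  have hms1 : s' < 1 := by have := Nat.lt_floor_add_one t'; simp only [hs']; linarith
  have hmn : n + 2 ≤ m := by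
    have h1 : ((n + 2 : ℕ) : ℝ) ≤ t' := by
      push_cast
      have := Nat.floor_le ht
      linarith
    exact Nat.le_floor h1
  have hteq : t = (n:ℝ) + s := by simp [hs]
  have hteq' : t' = (m:ℝ) + s' := by simp [hs']
  have hy : gam e t ∈ spanF e m := by
    rw [hteq]
    exact spanF_mono e hmn (gam_mem_spanF e n hns hns1)
  set y := gam e t with hydef
  have hgt' : gam e t' = uvec e m + s' • dvec e m := by
    rw [hteq']; exact gam_seg e m hms (le_of_lt hms1)
  rcases le_or_gt (1/4 : ℝ) s' with hcase | hcase
  · -- bound via e (m+1)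
    have hz : y - (1 - s') • uvec e m ∈ spanF e (m+1) :=
      Submodule.sub_mem _ (spanF_mono e (by omega) hy)
        (Submodule.smul_mem _ _ (uvec_mem_spanF e (by omega)))
    have heq : gam e t' - y = (s' * 2⁻¹) • e (m+1) - (y - (1 - s') • uvec e m) := by
      rw [hgt']
      simp only [dvec, uvec]
      module
    have hc : (0:ℝ) < s' * 2⁻¹ := by linarith
    have := dist_smul_spanF hesep (n := m+1) hc hz
    rw [← heq] at this
    calc (1:ℝ)/16 ≤ (s' * 2⁻¹) / 2 := by linarith
      _ ≤ ‖gam e t' - y‖ := this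
  · -- bound via e m
    have ha : ((1 - s') * 2⁻¹) / 2 ≤ ‖((1 - s') * 2⁻¹) • e m - y‖ :=
      dist_smul_spanF hesep (by nlinarith) hy
    have heq : gam e t' - y = (((1 - s') * 2⁻¹) • e m - y) + (s' * 2⁻¹) • e (m+1) := by
      rw [hgt']
      simp only [dvec, uvec]
      module
    have hb : ‖(s' * 2⁻¹) • e (m+1)‖ = s' * 2⁻¹ := by
      rw [norm_smul, he1, Real.norm_of_nonneg (by linarith)]
      ring
    have htri : ‖((1 - s') * 2⁻¹) • e m - y‖ - ‖(s' * 2⁻¹) • e (m+1)‖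
        ≤ ‖gam e t' - y‖ := by
      rw [heq]
      have := norm_le_add_norm_add (((1 - s') * 2⁻¹) • e m - y) ((s' * 2⁻¹) • e (m+1))
      linarith [this]
    rw [hb] at htri
    nlinarith

/-- tail pieces of the path -/
def Qset (e : ℕ → E) (n : ℕ) : Set E := gam e '' (Set.Ici (n : ℝ))

lemma Qset_nonempty (e : ℕ → E) (n : ℕ) : (Qset e n).Nonempty :=
  ⟨gam e n, ⟨(n : ℝ), Set.self_mem_Ici, rfl⟩⟩

noncomputable def psi (e : ℕ → E) (n : ℕ) (x : E) : ℝ :=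
  max (1 - 400 * infDist x (Qset e n)) 0

lemma psi_nonneg (e : ℕ → E) (n : ℕ) (x : E) : 0 ≤ psi e n x := le_max_right _ _

lemma psi_continuous (e : ℕ → E) (n : ℕ) : Continuous (psi e n) :=
  (continuous_const.sub (continuous_const.mul (continuous_infDist_pt _))).max continuous_const

lemma psi_eq_zero {n : ℕ} {x : E} (h : (1:ℝ)/400 ≤ infDist x (Qset e n)) : psi e n x = 0 := by
  rw [psi, max_eq_right]
  linarith

lemma psi_eq_one {n : ℕ} {x : E} (h : infDist x (Qset e n) = 0) : psi e n x = 1 := by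
  rw [psi, h]
  norm_num

include he1 hesep in
lemma near_finite (x : E) : {n : ℕ | infDist x (Qset e n) < 1/200}.Finite := by
  set T := {n : ℕ | infDist x (Qset e n) < 1/200} with hT
  rcases Set.eq_empty_or_nonempty T with h | ⟨n₀, hn₀⟩
  · rw [h]; exact Set.finite_empty
  · obtain ⟨p, ⟨a, ha, rfl⟩, hpa⟩ := (infDist_lt_iff (Qset_nonempty e n₀)).1 hn₀
    refine Set.Finite.subset (Set.finite_Iio (⌈a⌉₊ + 2)) ?_
    intro m hm
    simp only [Set.mem_Iio]
    by_contra hge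
    push_neg at hge
    obtain ⟨q, ⟨b, hb, rfl⟩, hqb⟩ := (infDist_lt_iff (Qset_nonempty e m)).1 hm
    have ha0 : (0:ℝ) ≤ a := le_trans (Nat.cast_nonneg n₀) ha
    have hab : a + 2 ≤ b := by
      have h1 : a ≤ (⌈a⌉₊ : ℝ) := Nat.le_ceil a
      have h2 : ((⌈a⌉₊ + 2 : ℕ) : ℝ) ≤ (m : ℝ) := by exact_mod_cast hge
      have h3 : (m : ℝ) ≤ b := hb
      push_cast at h2
      linarith
    have := gam_sep he1 hesep ha0 hab
    have hd : ‖gam e b - gam e a‖ ≤ dist x (gam e a) + dist x (gam e b) := by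
      rw [← dist_eq_norm]
      calc dist (gam e b) (gam e a) ≤ dist (gam e b) x + dist x (gam e a) := dist_triangle _ _ _
        _ = dist x (gam e a) + dist x (gam e b) := by rw [dist_comm (gam e b) x]; ring
    linarith

include he1 hesep in
lemma psi_summable (x : E) : Summable (fun n => psi e n x) := by
  refine summable_of_ne_finset_zero (s := (near_finite he1 hesep x).toFinset) ?_
  intro n hn
  rw [Set.Finite.mem_toFinset] at hn
  simp only [Set.mem_setOf_eq, not_lt] at hn
  exact psi_eq_zero (le_trans (by norm_num) hn)

noncomputable def tau (e : ℕ → E) (x : E) : ℝ := ∑' n, psi e n x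

lemma tau_nonneg (x : E) : 0 ≤ tau e x := tsum_nonneg (fun n => psi_nonneg e n x)

include he1 hesep in
lemma tau_continuous : Continuous (tau e) := by
  rw [continuous_iff_continuousAt]
  intro x₀
  set W := (near_finite he1 hesep x₀).toFinset with hW
  have hcong : ∀ x ∈ ball x₀ (1/400), tau e x = ∑ n ∈ W, psi e n x := by
    intro x hx
    refine tsum_eq_sum ?_
    intro n hn
    by_contra hne
    have hlt : infDist x (Qset e n) < 1/400 := by
      by_contra hge
      push_neg at hge
      exact hne (psi_eq_zero hge)
    have : infDist x₀ (Qset e n) < 1/200 := by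
      have h1 : infDist x₀ (Qset e n) ≤ infDist x (Qset e n) + dist x₀ x :=
        infDist_le_infDist_add_dist
      have h2 : dist x₀ x < 1/400 := by
        rw [dist_comm]; exact mem_ball.1 hx
      linarith
    rw [hW] at hn
    rw [Set.Finite.mem_toFinset] at hn
    exact hn this
  have hsum : Continuous fun x => ∑ n ∈ W, psi e n x :=
    continuous_finset_sum _ fun n _ => psi_continuous e n
  refine ContinuousAt.congr hsum.continuousAt ?_
  filter_upwards [ball_mem_nhds x₀ (by norm_num : (0:ℝ) < 1/400)] with x hx
  exact (hcong x hx).symm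

include he1 hesep in
lemma tau_lower {t : ℝ} (ht : 0 ≤ t) : t < tau e (gam e t) := by
  have hle : ((⌊t⌋₊ + 1 : ℕ) : ℝ) ≤ tau e (gam e t) := by
    have : ∀ n ∈ Finset.range (⌊t⌋₊ + 1), psi e n (gam e t) = 1 := by
      intro n hn
      refine psi_eq_one (infDist_zero_of_mem ?_)
      refine ⟨t, ?_, rfl⟩
      simp only [Set.mem_Ici]
      have := Finset.mem_range.1 hn
      have : (n : ℝ) ≤ (⌊t⌋₊ : ℝ) := by exact_mod_cast Nat.lt_succ_iff.1 this
      have hfl : (⌊t⌋₊ : ℝ) ≤ t := Nat.floor_le ht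
      linarith
    have hsum : ∑ n ∈ Finset.range (⌊t⌋₊ + 1), psi e n (gam e t) = ((⌊t⌋₊ + 1 : ℕ) : ℝ) := by
      rw [Finset.sum_congr rfl this]
      simp
    rw [← hsum]
    exact Summable.sum_le_tsum _ (fun n _ => psi_nonneg e n _) (psi_summable he1 hesep _)
  have : t < ((⌊t⌋₊ + 1 : ℕ) : ℝ) := by
    push_cast
    exact Nat.lt_floor_add_one t
  linarith

/-- the fixed-point-free map -/
noncomputable def GG (e : ℕ → E) (x : E) : E := gam e (tau e x + 1)

include he1 hesep in
lemma GG_continuous : Continuous (GG e) :=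
  (continuous_gam e).comp ((tau_continuous he1 hesep).add continuous_const)

include he1 hesep in
lemma GG_norm (x : E) : ‖GG e x‖ ≤ 1/2 := gam_norm he1 _

include he1 hesep in
lemma GG_ne (x : E) : GG e x ≠ x := by
  intro hfix
  have h0 : (0:ℝ) ≤ tau e x + 1 := by linarith [tau_nonneg (e := e) x]
  have := tau_lower he1 hesep h0
  rw [show gam e (tau e x + 1) = GG e x from rfl, hfix] at this
  linarith

lemma Mcvx (c d : E) {r t : ℝ} (ht : 0 < t) (hr0 : 0 ≤ r) (hrt : r ≤ t) :
    ‖c + r • d‖ ≤ (1 - r/t) * ‖c‖ + (r/t) * ‖c + t • d‖ := by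
  have hl0 : 0 ≤ r/t := div_nonneg hr0 (le_of_lt ht)
  have hl1 : r/t ≤ 1 := (div_le_one ht).2 hrt
  have key : c + r • d = (1 - r/t) • c + (r/t) • (c + t • d) := by
    rw [smul_add, smul_smul, div_mul_cancel₀ r ht.ne']
    module
  rw [key]
  calc ‖(1 - r/t) • c + (r/t) • (c + t • d)‖
      ≤ ‖(1 - r/t) • c‖ + ‖(r/t) • (c + t • d)‖ := norm_add_le _ _
    _ = (1 - r/t) * ‖c‖ + (r/t) * ‖c + t • d‖ := by
        rw [norm_smul, norm_smul, Real.norm_of_nonneg (by linarith), Real.norm_of_nonneg hl0]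

lemma Mcvx_between (c d : E) {r t : ℝ} (hr0 : 0 ≤ r) (hrt : r ≤ t)
    (hc : ‖c‖ ≤ 1) (htS : ‖c + t • d‖ ≤ 1) : ‖c + r • d‖ ≤ 1 := by
  rcases eq_or_lt_of_le hr0 with h | hr0'
  · rw [← h, zero_smul, add_zero]; exact hc
  · have ht : 0 < t := lt_of_lt_of_le hr0' hrt
    have := Mcvx c d ht hr0 hrt
    have hl0 : 0 ≤ r/t := div_nonneg hr0 (le_of_lt ht)
    have hl1 : r/t ≤ 1 := (div_le_one ht).2 hrt
    nlinarith

/-- the sublevel set of the ray norm function -/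
def raySet (g : E → E) (z : E) : Set ℝ := {t : ℝ | ‖g z + t • (z - g z)‖ ≤ 1}

noncomputable def bfn (g : E → E) (z : E) : ℝ := sSup (raySet g z)

section props
variable {g : E → E} (hg1 : ∀ x, ‖g x‖ ≤ 1/2) (hg2 : ∀ x, g x ≠ x)

lemma raySet_mem_one {z : E} (hz : ‖z‖ ≤ 1) : (1:ℝ) ∈ raySet g z := by
  simp only [raySet, mem_setOf_eq, one_smul]
  rw [add_sub_cancel]
  exact hz

include hg2 in
lemma dne (z : E) : z - g z ≠ 0 := fun h => hg2 z (sub_eq_zero.1 h).symm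

include hg1 hg2 in
lemma raySet_bdd (z : E) : BddAbove (raySet g z) := by
  have hdpos : 0 < ‖z - g z‖ := norm_pos_iff.2 (dne hg2 z)
  refine ⟨(3/2) / ‖z - g z‖, ?_⟩
  intro t ht
  simp only [raySet, mem_setOf_eq] at ht
  have h1 : ‖t • (z - g z)‖ ≤ 3/2 := by
    have e : t • (z - g z) = (g z + t • (z - g z)) - g z := by abel
    rw [e]
    calc ‖(g z + t • (z - g z)) - g z‖ ≤ ‖g z + t • (z - g z)‖ + ‖g z‖ := norm_sub_le _ _
      _ ≤ 1 + 1/2 := add_le_add ht (hg1 z)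
      _ = 3/2 := by norm_num
  rw [norm_smul, Real.norm_eq_abs] at h1
  rw [le_div_iff₀ hdpos]
  calc t * ‖z - g z‖ ≤ |t| * ‖z - g z‖ :=
        mul_le_mul_of_nonneg_right (le_abs_self t) (le_of_lt hdpos)
    _ ≤ 3/2 := h1

lemma raySet_closed (g : E → E) (z : E) : IsClosed (raySet g z) := by
  have : Continuous fun t : ℝ => ‖g z + t • (z - g z)‖ := by fun_prop
  exact isClosed_le this continuous_const

include hg1 hg2 in
lemma bfn_ge_one {z : E} (hz : ‖z‖ ≤ 1) : 1 ≤ bfn g z :=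
  le_csSup (raySet_bdd hg1 hg2 z) (raySet_mem_one hz)

include hg1 hg2 in
lemma bfn_mem {z : E} (hz : ‖z‖ ≤ 1) : bfn g z ∈ raySet g z :=
  (raySet_closed g z).csSup_mem ⟨1, raySet_mem_one hz⟩ (raySet_bdd hg1 hg2 z)

include hg1 hg2 in
lemma bfn_norm {z : E} (hz : ‖z‖ ≤ 1) : ‖g z + bfn g z • (z - g z)‖ = 1 := by
  refine le_antisymm (bfn_mem hg1 hg2 hz) ?_
  by_contra hlt
  push_neg at hlt
  have hcont : ContinuousAt (fun t : ℝ => ‖g z + t • (z - g z)‖) (bfn g z) := by fun_prop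
  have hev : ∀ᶠ t in nhds (bfn g z), ‖g z + t • (z - g z)‖ < 1 :=
    hcont.eventually_lt continuousAt_const hlt
  obtain ⟨δ, hδpos, hδ⟩ := Metric.eventually_nhds_iff.1 hev
  have hmem : bfn g z + δ/2 ∈ raySet g z := by
    refine le_of_lt (hδ ?_)
    rw [Real.dist_eq, show bfn g z + δ/2 - bfn g z = δ/2 by ring,
      abs_of_pos (half_pos hδpos)]
    exact half_lt_self hδpos
  have hle : bfn g z + δ/2 ≤ bfn g z := le_csSup (raySet_bdd hg1 hg2 z) hmem
  linarith

include hg1 hg2 in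
lemma bfn_sphere {z : E} (hz : ‖z‖ = 1) : bfn g z = 1 := by
  refine le_antisymm ?_ (bfn_ge_one hg1 hg2 (le_of_eq hz))
  refine csSup_le ⟨1, raySet_mem_one (le_of_eq hz)⟩ ?_
  intro t ht
  by_contra hgt
  push_neg at hgt
  have ht0 : (0:ℝ) < t := lt_trans one_pos hgt
  have hM := Mcvx (g z) (z - g z) ht0 (le_of_lt one_pos) (le_of_lt hgt)
  rw [one_smul, add_sub_cancel, hz] at hM
  simp only [raySet, mem_setOf_eq] at ht
  have h12 : ‖g z‖ ≤ 1/2 := hg1 z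
  have hq0 : 0 < 1/t := by positivity
  have hq1 : 1/t < 1 := by rw [div_lt_one ht0]; exact hgt
  nlinarith [mul_le_mul_of_nonneg_left h12 (by linarith : (0:ℝ) ≤ 1 - 1/t),
    mul_le_mul_of_nonneg_left ht (le_of_lt hq0)]

end props

section cont
variable {g : E → E} (hg1 : ∀ x, ‖g x‖ ≤ 1/2) (hg2 : ∀ x, g x ≠ x)

include hg1 hg2 in
lemma bfn_margin_up {z : E} (hz : ‖z‖ ≤ 1) {ε₁ : ℝ} (h : 0 < ε₁) :
    1 + ε₁/(2*bfn g z) ≤ ‖g z + (bfn g z + ε₁) • (z - g z)‖ := by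
  set b := bfn g z with hb
  have hb1 : 1 ≤ b := bfn_ge_one hg1 hg2 hz
  have hbpos : 0 < b := by linarith
  have hT : (0:ℝ) < b + ε₁ := by linarith
  have hM := Mcvx (g z) (z - g z) hT (le_of_lt hbpos) (by linarith : b ≤ b + ε₁)
  have hbn : ‖g z + b • (z - g z)‖ = 1 := by rw [hb]; exact bfn_norm hg1 hg2 hz
  rw [hbn] at hM
  set MT := ‖g z + (b + ε₁) • (z - g z)‖ with hMT
  have hMT0 : 0 ≤ MT := norm_nonneg _
  have hMul : (b + ε₁) * 1 ≤ (b + ε₁) * ((1 - b/(b+ε₁)) * ‖g z‖ + (b/(b+ε₁)) * MT) :=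
    mul_le_mul_of_nonneg_left hM (le_of_lt hT)
  have hexp : (b + ε₁) * ((1 - b/(b+ε₁)) * ‖g z‖ + (b/(b+ε₁)) * MT)
      = ε₁ * ‖g z‖ + b * MT := by
    field_simp
    ring
  rw [hexp, mul_one] at hMul
  have hgz : ‖g z‖ ≤ 1/2 := hg1 z
  have hkey : b + ε₁/2 ≤ b * MT := by nlinarith
  rw [show 1 + ε₁/(2*b) = (b + ε₁/2)/b by field_simp, div_le_iff₀ hbpos]
  nlinarith

include hg1 hg2 in
lemma bfn_margin_down {z : E} (hz : ‖z‖ ≤ 1) {ε₁ : ℝ} (h0 : 0 < ε₁)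
    (h1 : ε₁ ≤ bfn g z) :
    ‖g z + (bfn g z - ε₁) • (z - g z)‖ ≤ 1 - ε₁/(2*bfn g z) := by
  set b := bfn g z with hb
  have hb1 : 1 ≤ b := bfn_ge_one hg1 hg2 hz
  have hbpos : 0 < b := by linarith
  have hM := Mcvx (g z) (z - g z) hbpos (by linarith : (0:ℝ) ≤ b - ε₁)
    (by linarith : b - ε₁ ≤ b)
  have hbn : ‖g z + b • (z - g z)‖ = 1 := by rw [hb]; exact bfn_norm hg1 hg2 hz
  rw [hbn] at hM
  set Mr := ‖g z + (b - ε₁) • (z - g z)‖ with hMr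
  have hMr0 : 0 ≤ Mr := norm_nonneg _
  have hMul : b * Mr ≤ b * ((1 - (b-ε₁)/b) * ‖g z‖ + ((b-ε₁)/b) * 1) :=
    mul_le_mul_of_nonneg_left hM (le_of_lt hbpos)
  have hexp : b * ((1 - (b-ε₁)/b) * ‖g z‖ + ((b-ε₁)/b) * 1)
      = ε₁ * ‖g z‖ + (b - ε₁) := by
    field_simp
    ring
  rw [hexp] at hMul
  have hgz : ‖g z‖ ≤ 1/2 := hg1 z
  have hgz0 : 0 ≤ ‖g z‖ := norm_nonneg _
  have hkey : b * Mr ≤ b - ε₁/2 := by nlinarith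
  rw [show 1 - ε₁/(2*b) = (b - ε₁/2)/b by field_simp, le_div_iff₀ hbpos]
  nlinarith

lemma Mdiff (z z' c c' : E) {t : ℝ} (ht : 0 ≤ t) :
    |‖c + t • (z - c)‖ - ‖c' + t • (z' - c')‖| ≤ (1+t) * ‖c - c'‖ + t * ‖z - z'‖ := by
  have h1 := abs_norm_sub_norm_le (c + t • (z - c)) (c' + t • (z' - c'))
  have heq : (c + t • (z - c)) - (c' + t • (z' - c'))
      = (1-t) • (c - c') + t • (z - z') := by module
  rw [heq] at h1
  have h2 : ‖(1-t) • (c - c') + t • (z - z')‖ ≤ (1+t) * ‖c - c'‖ + t * ‖z - z'‖ := by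
    calc ‖(1-t) • (c - c') + t • (z - z')‖
        ≤ ‖(1-t) • (c - c')‖ + ‖t • (z - z')‖ := norm_add_le _ _
      _ = |1-t| * ‖c - c'‖ + t * ‖z - z'‖ := by
          rw [norm_smul, norm_smul, Real.norm_eq_abs, Real.norm_of_nonneg ht]
      _ ≤ (1+t) * ‖c - c'‖ + t * ‖z - z'‖ := by
          have : |1-t| ≤ 1+t := abs_le.2 ⟨by linarith, by linarith⟩
          have := mul_le_mul_of_nonneg_right this (norm_nonneg (c - c'))
          linarith
  linarith

include hg1 hg2 in
lemma bfn_continuous (hgc : Continuous g) :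
    Continuous (fun x : Metric.closedBall (0:E) 1 => bfn g (x:E)) := by
  rw [continuous_iff_continuousAt]
  intro x₀
  rw [Metric.continuousAt_iff]
  intro ε hε
  have hx₀ : ‖(x₀:E)‖ ≤ 1 := by
    have := x₀.2
    rwa [Metric.mem_closedBall, dist_zero_right] at this
  set b₀ : ℝ := bfn g (x₀:E) with hb₀
  have hb₀1 : 1 ≤ b₀ := bfn_ge_one hg1 hg2 hx₀
  set ε₁ : ℝ := min (ε/2) (1/2) with hε₁
  have hε₁pos : 0 < ε₁ := lt_min (half_pos hε) (by norm_num)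
  have hε₁le : ε₁ ≤ 1/2 := min_le_right _ _
  have hε₁lt : ε₁ < ε := lt_of_le_of_lt (min_le_left _ _) (half_lt_self hε)
  set κ : ℝ := ε₁ / (4 * b₀) with hκ
  have hκpos : 0 < κ := div_pos hε₁pos (by linarith)
  have h2κ : ε₁/(2*b₀) = 2*κ := by rw [hκ]; ring
  set C : ℝ := b₀ + 2 with hC
  have hCpos : 0 < C := by linarith
  have hgcont : ContinuousAt g (x₀ : E) := hgc.continuousAt
  rw [Metric.continuousAt_iff] at hgcont
  obtain ⟨δ₁, hδ₁pos, hδ₁⟩ := hgcont (κ / C) (div_pos hκpos hCpos)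
  refine ⟨min δ₁ (κ / C), lt_min hδ₁pos (div_pos hκpos hCpos), ?_⟩
  intro x hx
  have hxball : ‖(x : E)‖ ≤ 1 := by
    have := x.2
    rwa [Metric.mem_closedBall, dist_zero_right] at this
  have hdx : dist (x : E) (x₀ : E) < min δ₁ (κ / C) := hx
  have hgclose : ‖g (x : E) - g (x₀ : E)‖ < κ / C := by
    have := hδ₁ (lt_of_lt_of_le hdx (min_le_left _ _))
    rwa [dist_eq_norm] at this
  have hxclose : ‖(x : E) - (x₀ : E)‖ < κ / C := by
    have := lt_of_lt_of_le hdx (min_le_right _ _)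
    rwa [dist_eq_norm] at this
  have hMdiff : ∀ t : ℝ, 0 ≤ t → t ≤ b₀ + 1 →
      |‖g (x:E) + t • ((x:E) - g (x:E))‖ - ‖g (x₀:E) + t • ((x₀:E) - g (x₀:E))‖| < 2*κ := by
    intro t ht0 ht1
    have h1 := Mdiff (x:E) (x₀:E) (g (x:E)) (g (x₀:E)) ht0
    have h2 : (1+t) * ‖g (x:E) - g (x₀:E)‖ + t * ‖(x:E) - (x₀:E)‖ < 2*κ := by
      have e1 : (1+t) * ‖g (x:E) - g (x₀:E)‖ ≤ C * ‖g (x:E) - g (x₀:E)‖ :=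
        mul_le_mul_of_nonneg_right (by rw [hC]; linarith) (norm_nonneg _)
      have e2 : t * ‖(x:E) - (x₀:E)‖ ≤ C * ‖(x:E) - (x₀:E)‖ :=
        mul_le_mul_of_nonneg_right (by rw [hC]; linarith) (norm_nonneg _)
      have e5 : C * (κ/C) = κ := by field_simp
      have e3 : C * ‖g (x:E) - g (x₀:E)‖ < κ := by
        rw [← e5]; exact mul_lt_mul_of_pos_left hgclose hCpos
      have e4 : C * ‖(x:E) - (x₀:E)‖ < κ := by
        rw [← e5]; exact mul_lt_mul_of_pos_left hxclose hCpos
      linarith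
    linarith
  -- upper bound
  have hup : bfn g (x:E) ≤ b₀ + ε₁ := by
    by_contra hgt
    push_neg at hgt
    obtain ⟨t, htS, htgt⟩ := exists_lt_of_lt_csSup ⟨1, raySet_mem_one hxball⟩ hgt
    have htS' : ‖g (x:E) + t • ((x:E) - g (x:E))‖ ≤ 1 := htS
    have hbetween : ‖g (x:E) + (b₀+ε₁) • ((x:E) - g (x:E))‖ ≤ 1 :=
      Mcvx_between (g (x:E)) _ (by linarith) (le_of_lt htgt)
        (le_trans (hg1 _) (by norm_num)) htS'
    have hlow := bfn_margin_up hg1 hg2 hx₀ hε₁pos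
    rw [← hb₀, h2κ] at hlow
    have hdiff := hMdiff (b₀+ε₁) (by linarith) (by linarith)
    have habs := abs_lt.1 hdiff
    linarith [habs.1]
  -- lower bound
  have hdown : b₀ - ε₁ ≤ bfn g (x:E) := by
    refine le_csSup (raySet_bdd hg1 hg2 _) ?_
    have hhigh := bfn_margin_down hg1 hg2 hx₀ hε₁pos (by linarith : ε₁ ≤ bfn g (x₀:E))
    rw [← hb₀, h2κ] at hhigh
    have hdiff := hMdiff (b₀-ε₁) (by linarith) (by linarith)
    have habs := abs_lt.1 hdiff
    show ‖g (x:E) + (b₀-ε₁) • ((x:E) - g (x:E))‖ ≤ 1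
    linarith [habs.1]
  rw [Real.dist_eq]
  have : |bfn g (x:E) - b₀| ≤ ε₁ := abs_le.2 ⟨by linarith, by linarith⟩
  exact lt_of_le_of_lt this hε₁lt

include hg1 hg2 in
lemma retraction_of_fpf (hgc : Continuous g) :
    ∃ ω : Metric.closedBall (0 : E) 1 → Metric.sphere (0 : E) 1,
      Continuous ω ∧
      ∀ x : Metric.closedBall (0 : E) 1, (x : E) ∈ Metric.sphere (0 : E) 1 → (ω x : E) = x := by
  have hxnorm : ∀ x : Metric.closedBall (0 : E) 1, ‖(x:E)‖ ≤ 1 := by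
    intro x
    have := x.2
    rwa [Metric.mem_closedBall, dist_zero_right] at this
  refine ⟨fun x => ⟨g (x:E) + bfn g (x:E) • ((x:E) - g (x:E)), ?_⟩, ?_, ?_⟩
  · rw [mem_sphere_zero_iff_norm]
    exact bfn_norm hg1 hg2 (hxnorm _)
  · refine Continuous.subtype_mk ?_ _
    exact ((hgc.comp continuous_subtype_val).add
      ((bfn_continuous hg1 hg2 hgc).smul
        (continuous_subtype_val.sub (hgc.comp continuous_subtype_val))))
  · intro x hx
    have hx1 : ‖(x:E)‖ = 1 := by rwa [mem_sphere_zero_iff_norm] at hx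
    simp only
    rw [bfn_sphere hg1 hg2 hx1, one_smul, add_sub_cancel]

end cont

end Stmt12Aux

/-- In an infinite-dimensional Banach space, the unit sphere is a retract of the closed
unit ball. -/
theorem stmt12 (E : Type*) [NormedAddCommGroup E] [NormedSpace ℝ E] [CompleteSpace E]
    (hdim : ¬ FiniteDimensional ℝ E) :
    ∃ ω : Metric.closedBall (0 : E) 1 → Metric.sphere (0 : E) 1,
      Continuous ω ∧
      ∀ x : Metric.closedBall (0 : E) 1, (x : E) ∈ Metric.sphere (0 : E) 1 → (ω x : E) = x := by
  set e : ℕ → E := fun n => rzSeq hdim n with he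
  have he1 : ∀ n, ‖e n‖ = 1 := fun n => (rzSeq_spec hdim n).1
  have hesep : ∀ n, ∀ y ∈ spanF e n, (1:ℝ)/2 ≤ ‖e n - y‖ := fun n => (rzSeq_spec hdim n).2
  exact retraction_of_fpf (GG_norm he1 hesep) (GG_ne he1 hesep) (GG_continuous he1 hesep)
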